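/- arXiv:2507.08883 — 4 statements merged into one kernel-verified Lean document; each statement's English description precedes it below -/
import Mathlib

section
/- Let ζ ∈ ℂ, let Λ and g be complex-analytic functions on a neighborhood of ζ with g(ζ) = 0, g'(ζ) ≠ 0 and Λ'(ζ) ≠ 0, and let h be analytic on a neighborhood of Λ(ζ). Let k be a natural number and let h̃ be an analytic function on a neighborhood of ζ that agrees, for t ≠ ζ near ζ, with h̃(t) = h(Λ(t)) · g(t)^{k+1}/(Λ(t) − Λ(ζ))^{k+1} · Λ'(t)/g'(t). Then h^{(k)}(Λ(ζ)) = ((D_g)^k h̃)(ζ), where D_g denotes the operator (D_g u)(t) = u'(t)/g'(t) and (D_g)^k is its k-fold iterate. -/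
open Complex Filter

/-- The weighted differentiation operator `D_g`: `(D_g u)(t) = u'(t) / g'(t)`. -/
noncomputable def Dg (g u : ℂ → ℂ) : ℂ → ℂ := fun t => deriv u t / deriv g t

lemma analyticAt_deriv' {u : ℂ → ℂ} {z : ℂ} (hu : AnalyticAt ℂ u z) :
    AnalyticAt ℂ (deriv u) z := by
  obtain ⟨s, hs, h⟩ := hu.exists_mem_nhds_analyticOnNhd
  exact h.deriv z (mem_of_mem_nhds hs)

lemma analyticAt_dslope' {u : ℂ → ℂ} {z : ℂ} (hu : AnalyticAt ℂ u z) :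
    AnalyticAt ℂ (dslope u z) z := by
  obtain ⟨p, hp⟩ := hu
  exact (hp.has_fpower_series_dslope_fslope).analyticAt

lemma Dg_analytic {g u : ℂ → ℂ} {z : ℂ} (hg : AnalyticAt ℂ g z) (hg' : deriv g z ≠ 0)
    (hu : AnalyticAt ℂ u z) : AnalyticAt ℂ (Dg g u) z :=
  (analyticAt_deriv' hu).div (analyticAt_deriv' hg) hg'

lemma Dg_iter_congr {g u v : ℂ → ℂ} {z : ℂ} (h : u =ᶠ[nhds z] v) (n : ℕ) :
    (Dg g)^[n] u =ᶠ[nhds z] (Dg g)^[n] v := by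
  induction n with
  | zero => exact h
  | succ n ih =>
    rw [Function.iterate_succ_apply', Function.iterate_succ_apply']
    exact ih.deriv.mono fun t ht => by simp only [Dg, ht]

lemma Dg_add {g u v : ℂ → ℂ} {z : ℂ} (hu : AnalyticAt ℂ u z) (hv : AnalyticAt ℂ v z) :
    Dg g (fun t => u t + v t) =ᶠ[nhds z] fun t => Dg g u t + Dg g v t := by
  filter_upwards [hu.eventually_analyticAt, hv.eventually_analyticAt] with t htu htv
  simp only [Dg, deriv_fun_add htu.differentiableAt htv.differentiableAt, add_div]

lemma Dg_iter_add {g u v : ℂ → ℂ} {z : ℂ} (hg : AnalyticAt ℂ g z) (hg' : deriv g z ≠ 0)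
    (hu : AnalyticAt ℂ u z) (hv : AnalyticAt ℂ v z) (n : ℕ) :
    (Dg g)^[n] (fun t => u t + v t) =ᶠ[nhds z] fun t => (Dg g)^[n] u t + (Dg g)^[n] v t := by
  induction n generalizing u v with
  | zero => rfl
  | succ n ih =>
    rw [Function.iterate_succ_apply]
    calc (Dg g)^[n] (Dg g fun t => u t + v t)
        =ᶠ[nhds z] (Dg g)^[n] (fun t => Dg g u t + Dg g v t) :=
          Dg_iter_congr (Dg_add hu hv) n
      _ =ᶠ[nhds z] fun t => (Dg g)^[n] (Dg g u) t + (Dg g)^[n] (Dg g v) t :=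
          ih (Dg_analytic hg hg' hu) (Dg_analytic hg hg' hv)
      _ = fun t => (Dg g)^[n+1] u t + (Dg g)^[n+1] v t := by
          simp only [Function.iterate_succ_apply]

lemma Dg_iter_const_mul {g u : ℂ → ℂ} {z : ℂ} (hg : AnalyticAt ℂ g z) (hg' : deriv g z ≠ 0)
    (c : ℂ) (hu : AnalyticAt ℂ u z) (n : ℕ) :
    (Dg g)^[n] (fun t => c * u t) =ᶠ[nhds z] fun t => c * (Dg g)^[n] u t := by
  induction n generalizing u with
  | zero => rfl
  | succ n ih =>
    rw [Function.iterate_succ_apply]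
    have h1 : Dg g (fun t => c * u t) =ᶠ[nhds z] fun t => c * Dg g u t := by
      filter_upwards [hu.eventually_analyticAt] with t htu
      simp only [Dg, deriv_const_mul c htu.differentiableAt, mul_div_assoc]
    calc (Dg g)^[n] (Dg g fun t => c * u t)
        =ᶠ[nhds z] (Dg g)^[n] (fun t => c * Dg g u t) := Dg_iter_congr h1 n
      _ =ᶠ[nhds z] fun t => c * (Dg g)^[n] (Dg g u) t := ih (Dg_analytic hg hg' hu)
      _ = fun t => c * (Dg g)^[n+1] u t := by simp only [Function.iterate_succ_apply]

lemma Dg_g_mul {g G : ℂ → ℂ} {z : ℂ} (hg : AnalyticAt ℂ g z) (hg' : deriv g z ≠ 0)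
    (hG : AnalyticAt ℂ G z) :
    Dg g (fun t => g t * G t) =ᶠ[nhds z] fun t => G t + g t * Dg g G t := by
  filter_upwards [hg.eventually_analyticAt, hG.eventually_analyticAt,
    (analyticAt_deriv' hg).continuousAt.eventually_ne hg'] with t htg htG htg'
  simp only [Dg, deriv_fun_mul htg.differentiableAt htG.differentiableAt]
  field_simp

lemma keyA {g : ℂ → ℂ} {z : ℂ} (hg : AnalyticAt ℂ g z) (hgz : g z = 0)
    (hg' : deriv g z ≠ 0) :
    ∀ (n : ℕ) (G : ℂ → ℂ), AnalyticAt ℂ G z →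
      (Dg g)^[n + 1] (fun t => g t * G t) z = (n + 1 : ℂ) * (Dg g)^[n] G z := by
  intro n
  induction n with
  | zero =>
    intro G hG
    have h1 := (Dg_g_mul hg hg' hG).eq_of_nhds
    simp only [zero_add, Function.iterate_one, Function.iterate_zero, id_eq, Nat.cast_zero]
    rw [h1, hgz]
    ring
  | succ n ih =>
    intro G hG
    have hDG := Dg_analytic hg hg' hG
    have hgG : AnalyticAt ℂ (fun t => g t * Dg g G t) z := hg.mul hDG
    calc (Dg g)^[n + 2] (fun t => g t * G t) z
        = (Dg g)^[n + 1] (Dg g (fun t => g t * G t)) z := by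
          rw [Function.iterate_succ_apply]
      _ = (Dg g)^[n + 1] (fun t => G t + g t * Dg g G t) z :=
          (Dg_iter_congr (Dg_g_mul hg hg' hG) (n + 1)).eq_of_nhds
      _ = (Dg g)^[n + 1] G z + (Dg g)^[n + 1] (fun t => g t * Dg g G t) z :=
          (Dg_iter_add hg hg' hG hgG (n + 1)).eq_of_nhds
      _ = (Dg g)^[n + 1] G z + (n + 1 : ℂ) * (Dg g)^[n] (Dg g G) z := by
          rw [ih (Dg g G) hDG]
      _ = ((n + 1 : ℕ) + 1 : ℂ) * (Dg g)^[n + 1] G z := by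
          rw [← Function.iterate_succ_apply]; push_cast; ring

lemma Dg_iter_sub {g u v : ℂ → ℂ} {z : ℂ} (hg : AnalyticAt ℂ g z) (hg' : deriv g z ≠ 0)
    (hu : AnalyticAt ℂ u z) (hv : AnalyticAt ℂ v z) (n : ℕ) :
    (Dg g)^[n] (fun t => u t - v t) =ᶠ[nhds z] fun t => (Dg g)^[n] u t - (Dg g)^[n] v t := by
  have h1 : (fun t => u t - v t) = fun t => u t + (-1 : ℂ) * v t := by
    funext t; ring
  rw [h1]
  have h2 := Dg_iter_add (v := fun t => (-1 : ℂ) * v t) hg hg' hu ((analyticAt_const (v := (-1 : ℂ))).mul hv) n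
  have h3 := Dg_iter_const_mul hg hg' (-1 : ℂ) hv n
  filter_upwards [h2, h3] with t ht2 ht3
  rw [ht2, ht3]; ring

lemma eq_at_of_punctured {F F₀ : ℂ → ℂ} {z : ℂ} (hF : ContinuousAt F z)
    (hF₀ : ContinuousAt F₀ z) (h : F =ᶠ[nhdsWithin z {z}ᶜ] F₀) : F z = F₀ z := by
  have h1 : Filter.Tendsto F (nhdsWithin z {z}ᶜ) (nhds (F z)) :=
    hF.continuousWithinAt.tendsto
  have h2 : Filter.Tendsto F (nhdsWithin z {z}ᶜ) (nhds (F₀ z)) :=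
    (hF₀.continuousWithinAt.tendsto).congr' h.symm
  exact tendsto_nhds_unique h1 h2

lemma eventuallyEq_nhds_of_punctured {F F₀ : ℂ → ℂ} {z : ℂ} (hF : ContinuousAt F z)
    (hF₀ : ContinuousAt F₀ z) (h : F =ᶠ[nhdsWithin z {z}ᶜ] F₀) : F =ᶠ[nhds z] F₀ := by
  have hz := eq_at_of_punctured hF hF₀ h
  rw [← nhdsNE_sup_pure z]
  exact Filter.eventually_sup.mpr ⟨h, Filter.eventually_pure.mpr hz⟩

lemma alg2 (k : ℕ) (a b q L dΛ dg : ℂ) (hL : L ≠ 0) (hdg : dg ≠ 0) (hk : (k:ℂ)+1 ≠ 0) :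
    a * (q*L) ^ (k+1+1) / L ^ (k+1+1) * (dΛ / dg)
      = ((k:ℂ)+1)⁻¹ * ((q*L) * (b * q ^ (k+1) * (dΛ/dg))
        - ((q*L) * ((b * dΛ * q^(k+1) + a * (((k:ℂ)+1) * q^k * ((dg*L - (q*L)*dΛ)/L^2))) / dg)
          - ((k:ℂ)+1) * (a * q^(k+1)))) := by
  have hcan : a * (q ^ (k+1+1) * L ^ (k+1+1)) / L ^ (k+1+1) = a * q ^ (k+1+1) := by
    rw [← mul_assoc, mul_div_assoc, div_self (pow_ne_zero _ hL), mul_one]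
  rw [mul_pow, hcan]
  have e1 : q ^ (k+1+1) = q ^ k * q ^ 2 := by ring
  have e2 : q ^ (k+1) = q ^ k * q := by ring
  rw [e1, e2]
  generalize q ^ k = Q
  rw [eq_comm, inv_mul_eq_iff_eq_mul₀ hk, eq_comm]
  field_simp
  ring

lemma alg (k : ℕ) (a b gg L dΛ dg : ℂ) (hL : L ≠ 0) (hdg : dg ≠ 0) (hk : (k:ℂ)+1 ≠ 0) :
    a * gg ^ (k+1+1) / L ^ (k+1+1) * (dΛ / dg)
      = ((k:ℂ)+1)⁻¹ * (gg * (b * (gg/L) ^ (k+1) * (dΛ/dg))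
        - (gg * ((b * dΛ * (gg/L)^(k+1) + a * (((k:ℂ)+1) * (gg/L)^k * ((dg*L - gg*dΛ)/L^2))) / dg)
          - ((k:ℂ)+1) * (a * (gg/L)^(k+1)))) := by
  have h := alg2 k a b (gg/L) L dΛ dg hL hdg hk
  rw [div_mul_cancel₀ gg hL] at h
  exact h

set_option maxHeartbeats 2000000 in
theorem main_lemma (ζ : ℂ) (Λ g : ℂ → ℂ) (hΛ : AnalyticAt ℂ Λ ζ) (hg : AnalyticAt ℂ g ζ)
    (hgζ : g ζ = 0) (hg' : deriv g ζ ≠ 0) (hΛ' : deriv Λ ζ ≠ 0) :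
    ∀ (k : ℕ) (h F : ℂ → ℂ), AnalyticAt ℂ h (Λ ζ) → AnalyticAt ℂ F ζ →
      (∀ᶠ t in nhdsWithin ζ {ζ}ᶜ,
        F t = h (Λ t) * g t ^ (k + 1) / (Λ t - Λ ζ) ^ (k + 1) * (deriv Λ t / deriv g t)) →
      iteratedDeriv k h (Λ ζ) = (Dg g)^[k] F ζ := by
  have hμa : AnalyticAt ℂ (dslope Λ ζ) ζ := analyticAt_dslope' hΛ
  have hγa : AnalyticAt ℂ (dslope g ζ) ζ := analyticAt_dslope' hg
  have hμζ : dslope Λ ζ ζ = deriv Λ ζ := dslope_same Λ ζ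
  have hγζ : dslope g ζ ζ = deriv g ζ := dslope_same g ζ
  have hμζ' : dslope Λ ζ ζ ≠ 0 := by rw [hμζ]; exact hΛ'
  have hΛfac : ∀ t, Λ t - Λ ζ = (t - ζ) * dslope Λ ζ t := fun t => by
    have h1 := sub_smul_dslope Λ ζ t
    rw [smul_eq_mul] at h1
    exact h1.symm
  have hgfac : ∀ t, g t = (t - ζ) * dslope g ζ t := fun t => by
    have h1 := sub_smul_dslope g ζ t
    rw [smul_eq_mul, hgζ, sub_zero] at h1
    exact h1.symm
  intro k
  induction k with
  | zero =>
    intro h F hh hF hagree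
    have hF₀a : AnalyticAt ℂ (fun t => h (Λ t) * (dslope g ζ t / dslope Λ ζ t)
        * (deriv Λ t / deriv g t)) ζ :=
      ((hh.comp hΛ).mul (hγa.div hμa hμζ')).mul
        ((analyticAt_deriv' hΛ).div (analyticAt_deriv' hg) hg')
    have hpunc : F =ᶠ[nhdsWithin ζ {ζ}ᶜ] fun t => h (Λ t) * (dslope g ζ t / dslope Λ ζ t)
        * (deriv Λ t / deriv g t) := by
      have hμne : ∀ᶠ t in nhdsWithin ζ {ζ}ᶜ, dslope Λ ζ t ≠ 0 :=
        (hμa.continuousAt.eventually_ne hμζ').filter_mono nhdsWithin_le_nhds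
      filter_upwards [hagree, hμne, self_mem_nhdsWithin] with t ht hμt htne
      have htζ : t - ζ ≠ 0 := sub_ne_zero.mpr htne
      rw [ht, hΛfac t, hgfac t, pow_one, pow_one, mul_div_assoc,
        mul_div_mul_left _ _ htζ, ← mul_div_assoc]
    have heq : F ζ = h (Λ ζ) * (dslope g ζ ζ / dslope Λ ζ ζ) * (deriv Λ ζ / deriv g ζ) :=
      eq_at_of_punctured hF.continuousAt hF₀a.continuousAt hpunc
    rw [iteratedDeriv_zero, Function.iterate_zero, id_eq, heq, hμζ, hγζ]
    field_simp
  | succ k ih =>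
    intro h F hh hF hagree
    have hk1 : ((k : ℂ) + 1) ≠ 0 := by
      have h1 : ((k + 1 : ℕ) : ℂ) ≠ 0 := Nat.cast_ne_zero.mpr (Nat.succ_ne_zero k)
      push_cast at h1; exact h1
    have hqa : AnalyticAt ℂ (fun t => dslope g ζ t / dslope Λ ζ t) ζ := hγa.div hμa hμζ'
    have hhΛ : AnalyticAt ℂ (fun t => h (Λ t)) ζ := hh.comp hΛ
    have hh'Λ : AnalyticAt ℂ (fun t => deriv h (Λ t)) ζ := (analyticAt_deriv' hh).comp hΛ
    have hXa : AnalyticAt ℂ (fun t => deriv Λ t / deriv g t) ζ :=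
      (analyticAt_deriv' hΛ).div (analyticAt_deriv' hg) hg'
    set A : ℂ → ℂ := fun t => h (Λ t) * (dslope g ζ t / dslope Λ ζ t) ^ (k + 1) with hAdef
    set G : ℂ → ℂ := fun t => deriv h (Λ t) * (dslope g ζ t / dslope Λ ζ t) ^ (k + 1)
      * (deriv Λ t / deriv g t) with hGdef
    have hAa : AnalyticAt ℂ A ζ := hhΛ.mul (hqa.pow _)
    have hDAa : AnalyticAt ℂ (Dg g A) ζ := Dg_analytic hg hg' hAa
    have hGa : AnalyticAt ℂ G ζ := (hh'Λ.mul (hqa.pow _)).mul hXa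
    set H : ℂ → ℂ := fun t => g t * Dg g A t - ((k : ℂ) + 1) * A t with hHdef
    have hHa : AnalyticAt ℂ H ζ := (hg.mul hDAa).sub (analyticAt_const.mul hAa)
    set R : ℂ → ℂ := fun t => ((k : ℂ) + 1)⁻¹ * (g t * G t - H t) with hRdef
    have hRa : AnalyticAt ℂ R ζ := analyticAt_const.mul ((hg.mul hGa).sub hHa)
    -- the open set of good points
    have hP : ∀ᶠ t in nhds ζ, (AnalyticAt ℂ g t ∧ AnalyticAt ℂ Λ t ∧
        AnalyticAt ℂ (dslope Λ ζ) t ∧ AnalyticAt ℂ (dslope g ζ) t) ∧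
        (dslope Λ ζ t ≠ 0 ∧ deriv g t ≠ 0 ∧ AnalyticAt ℂ h (Λ t)) := by
      filter_upwards [hg.eventually_analyticAt, hΛ.eventually_analyticAt,
        hμa.eventually_analyticAt, hγa.eventually_analyticAt,
        hμa.continuousAt.eventually_ne hμζ',
        (analyticAt_deriv' hg).continuousAt.eventually_ne hg',
        hΛ.continuousAt.eventually hh.eventually_analyticAt] with t h1 h2 h3 h4 h5 h6 h7
      exact ⟨⟨h1, h2, h3, h4⟩, h5, h6, h7⟩
    obtain ⟨s, hsP, hso, hζs⟩ := eventually_nhds_iff.mp hP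
    have hqs : ∀ x ∈ s, x ≠ ζ → dslope g ζ x / dslope Λ ζ x = g x / (Λ x - Λ ζ) := by
      intro x hxs hxne
      have hμx := (hsP x hxs).2.1
      have hx : x - ζ ≠ 0 := sub_ne_zero.mpr hxne
      rw [hgfac x, hΛfac x, mul_div_mul_left _ _ hx]
    -- punctured agreement for G (for the induction hypothesis)
    have hGagree : ∀ᶠ t in nhdsWithin ζ {ζ}ᶜ,
        G t = deriv h (Λ t) * g t ^ (k + 1) / (Λ t - Λ ζ) ^ (k + 1)
          * (deriv Λ t / deriv g t) := by
      filter_upwards [mem_nhdsWithin_of_mem_nhds (hso.mem_nhds hζs),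
        self_mem_nhdsWithin] with t hts htne
      rw [hGdef]
      simp only []
      rw [hqs t hts htne, div_pow, ← mul_div_assoc (deriv h (Λ t))]
    have hIH := ih (deriv h) G (analyticAt_deriv' hh) hGa hGagree
    -- punctured agreement between F and R
    have hpunc : F =ᶠ[nhdsWithin ζ {ζ}ᶜ] R := by
      filter_upwards [hagree, mem_nhdsWithin_of_mem_nhds (hso.mem_nhds hζs),
        self_mem_nhdsWithin] with t hFt hts htne
      have htne' : t ≠ ζ := htne
      obtain ⟨⟨hgan, hΛan, hμan, hγan⟩, hμt, hdgt, hhan⟩ := hsP t hts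
      have htζ : (t : ℂ) - ζ ≠ 0 := sub_ne_zero.mpr htne'
      have hL : Λ t - Λ ζ ≠ 0 := by rw [hΛfac t]; exact mul_ne_zero htζ hμt
      have hgd := hgan.differentiableAt
      have hΛd := hΛan.differentiableAt
      have hqev : (fun x => dslope g ζ x / dslope Λ ζ x) =ᶠ[nhds t]
          fun x => g x / (Λ x - Λ ζ) := by
        filter_upwards [(hso.inter isOpen_compl_singleton).mem_nhds ⟨hts, htne⟩] with x hx
        exact hqs x hx.1 hx.2
      have hqder : HasDerivAt (fun x => dslope g ζ x / dslope Λ ζ x)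
          ((deriv g t * (Λ t - Λ ζ) - g t * deriv Λ t) / (Λ t - Λ ζ) ^ 2) t := by
        have h2a : HasDerivAt (fun x => g x / (Λ x - Λ ζ))
            ((deriv g t * (Λ t - Λ ζ) - g t * deriv Λ t) / (Λ t - Λ ζ) ^ 2) t :=
          hgd.hasDerivAt.div (hΛd.hasDerivAt.sub_const (Λ ζ)) hL
        exact h2a.congr_of_eventuallyEq hqev
      have hcomp : HasDerivAt (fun x => h (Λ x)) (deriv h (Λ t) * deriv Λ t) t :=
        HasDerivAt.comp t hhan.differentiableAt.hasDerivAt hΛd.hasDerivAt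
      have hAder : HasDerivAt (fun x => h (Λ x) * (dslope g ζ x / dslope Λ ζ x) ^ (k + 1))
          (deriv h (Λ t) * deriv Λ t * (dslope g ζ t / dslope Λ ζ t) ^ (k + 1)
            + h (Λ t) * (((k + 1 : ℕ) : ℂ) * (dslope g ζ t / dslope Λ ζ t) ^ (k + 1 - 1)
              * ((deriv g t * (Λ t - Λ ζ) - g t * deriv Λ t) / (Λ t - Λ ζ) ^ 2))) t :=
        hcomp.mul (hqder.pow (k + 1))
      rw [hFt, hRdef, hHdef, hGdef, hAdef]
      simp only [Dg]
      rw [hAder.deriv]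
      rw [hqs t hts htne']
      simp only [Nat.add_sub_cancel, Nat.cast_add, Nat.cast_one]
      exact alg k (h (Λ t)) (deriv h (Λ t)) (g t) (Λ t - Λ ζ) (deriv Λ t) (deriv g t)
        hL hdgt hk1
    have hnhds : F =ᶠ[nhds ζ] R :=
      eventuallyEq_nhds_of_punctured hF.continuousAt hRa.continuousAt hpunc
    -- assembly
    have e1 : (Dg g)^[k + 1] F ζ = (Dg g)^[k + 1] R ζ :=
      (Dg_iter_congr hnhds (k + 1)).eq_of_nhds
    have hsub1a : AnalyticAt ℂ (fun t => g t * G t - H t) ζ := (hg.mul hGa).sub hHa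
    have e2 : (Dg g)^[k + 1] R ζ
        = ((k : ℂ) + 1)⁻¹ * (Dg g)^[k + 1] (fun t => g t * G t - H t) ζ := by
      have := Dg_iter_const_mul hg hg' (((k : ℂ) + 1)⁻¹) hsub1a (k + 1)
      exact this.eq_of_nhds
    have e3 : (Dg g)^[k + 1] (fun t => g t * G t - H t) ζ
        = (Dg g)^[k + 1] (fun t => g t * G t) ζ - (Dg g)^[k + 1] H ζ :=
      (Dg_iter_sub hg hg' (hg.mul hGa) hHa (k + 1)).eq_of_nhds
    have e4 : (Dg g)^[k + 1] (fun t => g t * G t) ζ = ((k : ℂ) + 1) * (Dg g)^[k] G ζ :=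
      keyA hg hgζ hg' k G hGa
    have e5 : (Dg g)^[k + 1] H ζ = 0 := by
      have e5a : (Dg g)^[k + 1] H ζ = (Dg g)^[k + 1] (fun t => g t * Dg g A t) ζ
          - (Dg g)^[k + 1] (fun t => ((k : ℂ) + 1) * A t) ζ := by
        rw [hHdef]
        exact (Dg_iter_sub hg hg' (hg.mul hDAa) (analyticAt_const.mul hAa) (k + 1)).eq_of_nhds
      have e5b : (Dg g)^[k + 1] (fun t => g t * Dg g A t) ζ
          = ((k : ℂ) + 1) * (Dg g)^[k] (Dg g A) ζ := keyA hg hgζ hg' k (Dg g A) hDAa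
      have e5c : (Dg g)^[k + 1] (fun t => ((k : ℂ) + 1) * A t) ζ
          = ((k : ℂ) + 1) * (Dg g)^[k + 1] A ζ :=
        (Dg_iter_const_mul hg hg' _ hAa (k + 1)).eq_of_nhds
      rw [e5a, e5b, e5c, ← Function.iterate_succ_apply]
      ring
    rw [iteratedDeriv_succ', hIH, e1, e2, e3, e4, e5]
    field_simp
    ring

/-- **Lemma 2.1 of the paper.** If `h̃` agrees near `ζ` (off `ζ`) with
`h(Λ t) · g(t)^{k+1}/(Λ t − Λ ζ)^{k+1} · Λ'(t)/g'(t)`, then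
`h^{(k)}(Λ ζ) = ((D_g)^k h̃)(ζ)`. -/
theorem derivative_formula_via_weighted_diff
    (ζ : ℂ) (Λ g h htilde : ℂ → ℂ) (k : ℕ)
    (hΛ : AnalyticAt ℂ Λ ζ) (hg : AnalyticAt ℂ g ζ)
    (hgζ : g ζ = 0) (hg' : deriv g ζ ≠ 0) (hΛ' : deriv Λ ζ ≠ 0)
    (hh : AnalyticAt ℂ h (Λ ζ))
    (hht : AnalyticAt ℂ htilde ζ)
    (hagree : ∀ᶠ t in nhdsWithin ζ {ζ}ᶜ,
      htilde t = h (Λ t) * g t ^ (k + 1) / (Λ t - Λ ζ) ^ (k + 1)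
        * (deriv Λ t / deriv g t)) :
    iteratedDeriv k h (Λ ζ) = (Dg g)^[k] htilde ζ :=
  main_lemma ζ Λ g hΛ hg hgζ hg' hΛ' k h htilde hh hht hagree
end

section
/- Let ζ ∈ ℂ, let Λ be complex-analytic and injective on a neighborhood of the closed disk of radius r > 0 centered at ζ, with Λ'(ζ) ≠ 0, and let h be analytic on a neighborhood of the image under Λ of that closed disk. Let k be a natural number. Then (1/k!) · h^{(k)}(Λ(ζ)) equals the circle integral (1/(2πi)) ∮_{|t−ζ|=r} h(Λ(t)) · Λ'(t)/(Λ(t) − Λ(ζ))^{k+1} dt, where the circle is traversed once counterclockwise. -/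
open Complex Metric Function

private lemma analyticAt_dslope_self {f : ℂ → ℂ} {a : ℂ} (hf : AnalyticAt ℂ f a) :
    AnalyticAt ℂ (dslope f a) a := by
  obtain ⟨p, hp⟩ := hf
  exact hp.has_fpower_series_dslope_fslope.analyticAt

private lemma analyticAt_dslope_of_ne {f : ℂ → ℂ} {a x : ℂ} (hx : x ≠ a)
    (hf : AnalyticAt ℂ f x) : AnalyticAt ℂ (dslope f a) x := by
  have h1 : AnalyticAt ℂ (fun y => (f y - f a) / (y - a)) x :=
    (hf.sub analyticAt_const).div (analyticAt_id.sub analyticAt_const) (sub_ne_zero.2 hx)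
  refine h1.congr ?_
  have h2 := dslope_eventuallyEq_slope_of_ne f hx
  filter_upwards [h2] with y hy
  rw [hy, slope_def_field]

private lemma dslope_step (f : ℂ → ℂ) (a w : ℂ) :
    f w = f a + (w - a) * dslope f a w := by
  have h := sub_smul_dslope f a w
  rw [smul_eq_mul] at h
  linear_combination -h

private lemma dslope_taylor (k : ℕ) (f : ℂ → ℂ) (a w : ℂ) :
    f w = (∑ n ∈ Finset.range (k + 1), ((swap dslope a)^[n] f a) * (w - a) ^ n)
      + (w - a) ^ (k + 1) * ((swap dslope a)^[k + 1] f w) := by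
  induction k with
  | zero => simpa using dslope_step f a w
  | succ k ih =>
    have h1 : (swap dslope a)^[k + 1] f w
        = (swap dslope a)^[k + 1] f a + (w - a) * (swap dslope a)^[k + 2] f w := by
      rw [iterate_succ_apply' (swap dslope a) (k+1) f]
      exact dslope_step _ a w
    rw [Finset.sum_range_succ]
    calc f w = _ := ih
    _ = _ := by rw [h1]; ring

private lemma analyticAt_iterate_dslope {f : ℂ → ℂ} {V : Set ℂ} {a : ℂ}
    (ha : a ∈ V) (hf : ∀ y ∈ V, AnalyticAt ℂ f y) (m : ℕ) :
    ∀ y ∈ V, AnalyticAt ℂ ((swap dslope a)^[m] f) y := by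
  induction m with
  | zero => simpa using hf
  | succ m ih =>
    intro y hy
    rw [iterate_succ_apply']
    rcases eq_or_ne y a with rfl | hne
    · exact analyticAt_dslope_self (ih y hy)
    · exact analyticAt_dslope_of_ne hne (ih y hy)

private lemma iterate_dslope_self_eq {f : ℂ → ℂ} {a : ℂ} (hf : AnalyticAt ℂ f a) (n : ℕ) :
    (swap dslope a)^[n] f a = (1 / n.factorial : ℂ) * iteratedDeriv n f a := by
  obtain ⟨p, hp⟩ := hf
  have h1 : (swap dslope a)^[n] f a = p.coeff n := by
    have h2 := (hp.has_fpower_series_iterate_dslope_fslope n).coeff_zero (fun _ => 1)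
    rw [← h2]
    rw [show ((FormalMultilinearSeries.fslope^[n] p) 0 fun _ => 1)
        = (FormalMultilinearSeries.fslope^[n] p).coeff 0 from rfl,
      FormalMultilinearSeries.coeff_iterate_fslope]
    simp
  obtain ⟨R, hball⟩ := hp
  have h3 := hball.factorial_smul (y := (1 : ℂ)) n
  rw [iteratedDeriv_eq_iteratedFDeriv, ← h3]
  rw [h1]
  have : (p n fun _ => (1:ℂ)) = p.coeff n := rfl
  rw [this, nsmul_eq_mul]
  rw [← mul_assoc, one_div, inv_mul_cancel₀ (Nat.cast_ne_zero.2 n.factorial_ne_zero), one_mul]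

private lemma circleIntegral_add' {f g : ℂ → ℂ} {c : ℂ} {R : ℝ}
    (hf : CircleIntegrable f c R) (hg : CircleIntegrable g c R) :
    (∮ z in C(c, R), (f z + g z)) = (∮ z in C(c, R), f z) + ∮ z in C(c, R), g z := by
  simp only [circleIntegral, smul_add]
  exact intervalIntegral.integral_add hf.out hg.out

private lemma circleIntegral_finset_sum {ι : Type*} (s : Finset ι) {f : ι → ℂ → ℂ} {c : ℂ} {R : ℝ}
    (h : ∀ i ∈ s, CircleIntegrable (f i) c R) :
    (∮ z in C(c, R), (∑ i ∈ s, f i z)) = ∑ i ∈ s, ∮ z in C(c, R), f i z := by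
  simp only [circleIntegral, Finset.smul_sum]
  rw [intervalIntegral.integral_finset_sum]
  exact fun i hi => (h i hi).out

private lemma circleIntegral_pow_inv_deriv_eq_zero {Λ : ℂ → ℂ} {ζ a : ℂ} {r : ℝ} (hr : 0 < r)
    (hd : ∀ t ∈ sphere ζ r, HasDerivAt Λ (deriv Λ t) t)
    (hne : ∀ t ∈ sphere ζ r, Λ t - a ≠ 0) (m : ℕ) (hm : m ≠ 0) :
    (∮ t in C(ζ, r), deriv Λ t * ((Λ t - a) ^ (m + 1))⁻¹) = 0 := by
  apply circleIntegral.integral_eq_zero_of_hasDerivWithinAt (f := fun t =>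
    (-(m : ℂ))⁻¹ * (Λ t - a) ^ (-(m : ℤ))) hr.le
  intro t ht
  have h1 : HasDerivAt (fun s => Λ s - a) (deriv Λ t) t := (hd t ht).sub_const a
  have h2 : HasDerivAt (fun s => (Λ s - a) ^ (-(m : ℤ)))
      ((-(m : ℤ)) * (Λ t - a) ^ (-(m : ℤ) - 1) * deriv Λ t) t :=
    by simpa only [Int.cast_neg, Int.cast_natCast, Function.comp_def] using (hasDerivAt_zpow (-(m : ℤ)) _ (Or.inl (hne t ht))).comp t h1
  have h3 := h2.const_mul ((-(m : ℂ))⁻¹)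
  have h4 : (-(m : ℂ))⁻¹ * ((-(m : ℤ)) * (Λ t - a) ^ (-(m : ℤ) - 1) * deriv Λ t)
      = deriv Λ t * ((Λ t - a) ^ (m + 1))⁻¹ := by
    have e1 : (-(m : ℤ) - 1) = -((m + 1 : ℕ) : ℤ) := by push_cast; ring
    have hm' : (m : ℂ) ≠ 0 := Nat.cast_ne_zero.2 hm
    rw [e1, zpow_neg, zpow_natCast]
    field_simp
    simp
  rw [← h4]
  exact h3.hasDerivWithinAt

/-- Cauchy-type formula for the `k`-th derivative after a conformal change of
variable: `(1/k!) h^{(k)}(Λ ζ) = (1/(2πi)) ∮_{|t−ζ|=r} h(Λ t) Λ'(t)/(Λ t − Λ ζ)^{k+1} dt`. -/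
theorem deriv_cauchy_formula_conformal_change
    (ζ : ℂ) (r : ℝ) (hr : 0 < r) (Λ h : ℂ → ℂ) (k : ℕ)
    (hΛ : ∃ U : Set ℂ, IsOpen U ∧ closedBall ζ r ⊆ U ∧
      (∀ x ∈ U, AnalyticAt ℂ Λ x) ∧ Set.InjOn Λ U)
    (hΛ' : deriv Λ ζ ≠ 0)
    (hh : ∃ V : Set ℂ, IsOpen V ∧ Λ '' closedBall ζ r ⊆ V ∧
      ∀ y ∈ V, AnalyticAt ℂ h y) :
    (1 / (k.factorial : ℂ)) * iteratedDeriv k h (Λ ζ)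
      = (1 / (2 * Real.pi * Complex.I)) *
        ∮ t in C(ζ, r), h (Λ t) * deriv Λ t / (Λ t - Λ ζ) ^ (k + 1) := by
  obtain ⟨U, hUo, hUr, hΛa, hΛinj⟩ := hΛ
  obtain ⟨V, hVo, hVr, hha⟩ := hh
  have hζU : ζ ∈ U := hUr (mem_closedBall_self hr.le)
  have haV : Λ ζ ∈ V := hVr ⟨ζ, mem_closedBall_self hr.le, rfl⟩
  have hsubU : sphere ζ r ⊆ U := fun t ht => hUr (sphere_subset_closedBall ht)
  have hΛd : ∀ x ∈ U, AnalyticAt ℂ (deriv Λ) x := by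
    have h1 : AnalyticOnNhd ℂ Λ U := hΛa
    exact fun x hx => h1.deriv x hx
  set q : ℂ → ℂ := dslope Λ ζ with hq_def
  have hqa : ∀ x ∈ U, AnalyticAt ℂ q x := by
    intro x hx
    rcases eq_or_ne x ζ with rfl | hne
    · exact analyticAt_dslope_self (hΛa x hx)
    · exact analyticAt_dslope_of_ne hne (hΛa x hx)
  have hqmul : ∀ x : ℂ, (x - ζ) * q x = Λ x - Λ ζ := fun x => by
    simpa [smul_eq_mul] using sub_smul_dslope Λ ζ x
  have hqζ : q ζ = deriv Λ ζ := dslope_same Λ ζ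
  have hqne : ∀ x ∈ U, q x ≠ 0 := by
    intro x hx
    rcases eq_or_ne x ζ with rfl | hne
    · rw [hqζ]; exact hΛ'
    · intro h0
      have h1 := hqmul x
      rw [h0, mul_zero] at h1
      exact hne (hΛinj hx hζU (by rw [← sub_eq_zero, ← h1]))
  have hspne : ∀ t ∈ sphere ζ r, t ≠ ζ := by
    intro t ht heq
    rw [mem_sphere, heq, dist_self] at ht
    exact hr.ne ht
  have hΛsp : ∀ t ∈ sphere ζ r, Λ t - Λ ζ ≠ 0 := fun t ht =>
    sub_ne_zero.2 fun e => hspne t ht (hΛinj (hsubU ht) hζU e)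
  -- the correction term ψ
  set g : ℂ → ℂ := fun s => deriv Λ s - q s with hg_def
  have hg0 : g ζ = 0 := by simp [hg_def, hqζ]
  set ψ : ℂ → ℂ := fun t => dslope g ζ t / q t with hψ_def
  have hga : ∀ x ∈ U, AnalyticAt ℂ g x := fun x hx => (hΛd x hx).sub (hqa x hx)
  have hψa : ∀ x ∈ U, AnalyticAt ℂ ψ x := by
    intro x hx
    apply AnalyticAt.div _ (hqa x hx) (hqne x hx)
    rcases eq_or_ne x ζ with rfl | hne
    · exact analyticAt_dslope_self (hga x hx)
    · exact analyticAt_dslope_of_ne hne (hga x hx)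
  have key1 : ∀ t ∈ sphere ζ r, deriv Λ t * (Λ t - Λ ζ)⁻¹ = (t - ζ)⁻¹ + ψ t := by
    intro t ht
    have htζ : t - ζ ≠ 0 := sub_ne_zero.2 (hspne t ht)
    have hqt : q t ≠ 0 := hqne t (hsubU ht)
    have h1 : dslope g ζ t = g t / (t - ζ) := by
      rw [dslope_of_ne _ (hspne t ht), slope_def_field, hg0, sub_zero]
    simp only [hψ_def]
    rw [← hqmul t, h1]
    simp only [hg_def]
    field_simp
    ring
  -- Taylor-type decomposition data
  set c : ℕ → ℂ := fun n => (swap dslope (Λ ζ))^[n] h (Λ ζ) with hc_def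
  set H : ℂ → ℂ := (swap dslope (Λ ζ))^[k + 1] h with hH_def
  have hHV : ∀ y ∈ V, AnalyticAt ℂ H y := analyticAt_iterate_dslope haV hha (k + 1)
  have key2 : ∀ t ∈ sphere ζ r,
      h (Λ t) * deriv Λ t / (Λ t - Λ ζ) ^ (k + 1)
        = (∑ n ∈ Finset.range k, c n * (deriv Λ t * ((Λ t - Λ ζ) ^ (k - n + 1))⁻¹))
          + (c k * ((t - ζ)⁻¹ + ψ t) + H (Λ t) * deriv Λ t) := by
    intro t ht
    have hD : Λ t - Λ ζ ≠ 0 := hΛsp t ht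
    have hT : h (Λ t) = (∑ n ∈ Finset.range (k + 1), c n * (Λ t - Λ ζ) ^ n)
        + (Λ t - Λ ζ) ^ (k + 1) * H (Λ t) := dslope_taylor k h (Λ ζ) (Λ t)
    rw [← key1 t ht, hT, Finset.sum_range_succ]
    have hterm : ∀ n ∈ Finset.range k,
        c n * (deriv Λ t * ((Λ t - Λ ζ) ^ (k - n + 1))⁻¹)
          = c n * (Λ t - Λ ζ) ^ n * deriv Λ t / (Λ t - Λ ζ) ^ (k + 1) := by
      intro n hn
      have hnk : n < k := Finset.mem_range.1 hn
      have e : (Λ t - Λ ζ) ^ (k + 1) = (Λ t - Λ ζ) ^ n * (Λ t - Λ ζ) ^ (k - n + 1) := by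
        rw [← pow_add]; congr 1; omega
      rw [e]
      field_simp
    rw [Finset.sum_congr rfl hterm, ← Finset.sum_div, ← Finset.sum_mul]
    generalize (∑ n ∈ Finset.range k, c n * (Λ t - Λ ζ) ^ n) = S
    field_simp
    ring
  rw [circleIntegral.integral_congr hr.le (fun t ht => key2 t ht)]
  -- continuity facts on the sphere
  have hcΛ : ContinuousOn Λ (sphere ζ r) :=
    fun t ht => ((hΛa t (hsubU ht)).continuousAt).continuousWithinAt
  have hcΛ' : ContinuousOn (deriv Λ) (sphere ζ r) :=
    fun t ht => ((hΛd t (hsubU ht)).continuousAt).continuousWithinAt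
  have hcψ : ContinuousOn ψ (sphere ζ r) :=
    fun t ht => ((hψa t (hsubU ht)).continuousAt).continuousWithinAt
  have hi1 : ∀ n : ℕ, CircleIntegrable
      (fun t => c n * (deriv Λ t * ((Λ t - Λ ζ) ^ (k - n + 1))⁻¹)) ζ r := by
    intro n
    apply ContinuousOn.circleIntegrable hr.le
    exact continuousOn_const.mul (hcΛ'.mul (((hcΛ.sub continuousOn_const).pow _).inv₀
      (fun t ht => pow_ne_zero _ (hΛsp t ht))))
  have hiF1 : CircleIntegrable
      (fun t => ∑ n ∈ Finset.range k, c n * (deriv Λ t * ((Λ t - Λ ζ) ^ (k - n + 1))⁻¹)) ζ r := by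
    apply ContinuousOn.circleIntegrable hr.le
    apply continuousOn_finset_sum
    intro n _
    exact continuousOn_const.mul (hcΛ'.mul (((hcΛ.sub continuousOn_const).pow _).inv₀
      (fun t ht => pow_ne_zero _ (hΛsp t ht))))
  have hi2 : CircleIntegrable (fun t => c k * ((t - ζ)⁻¹ + ψ t)) ζ r := by
    apply ContinuousOn.circleIntegrable hr.le
    exact continuousOn_const.mul (((continuousOn_id.sub continuousOn_const).inv₀
      (fun t ht => sub_ne_zero.2 (hspne t ht))).add hcψ)
  have hi3 : CircleIntegrable (fun t => H (Λ t) * deriv Λ t) ζ r := by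
    apply ContinuousOn.circleIntegrable hr.le
    refine ContinuousOn.mul ?_ hcΛ'
    intro t ht
    exact (((hHV (Λ t) (hVr ⟨t, sphere_subset_closedBall ht, rfl⟩)).comp
      (hΛa t (hsubU ht))).continuousAt).continuousWithinAt
  have hi23 : CircleIntegrable
      (fun t => c k * ((t - ζ)⁻¹ + ψ t) + H (Λ t) * deriv Λ t) ζ r := hi2.add hi3
  rw [circleIntegral_add' hiF1 hi23, circleIntegral_add' hi2 hi3,
    circleIntegral_finset_sum _ (fun n _ => hi1 n)]
  -- each term of the finite sum vanishes
  have hΛder : ∀ t ∈ sphere ζ r, HasDerivAt Λ (deriv Λ t) t :=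
    fun t ht => (hΛa t (hsubU ht)).differentiableAt.hasDerivAt
  have hsum0 : ∀ n ∈ Finset.range k,
      (∮ t in C(ζ, r), c n * (deriv Λ t * ((Λ t - Λ ζ) ^ (k - n + 1))⁻¹)) = 0 := by
    intro n hn
    have hnk : n < k := Finset.mem_range.1 hn
    rw [circleIntegral.integral_const_mul,
      circleIntegral_pow_inv_deriv_eq_zero hr hΛder hΛsp (k - n) (by omega), mul_zero]
  rw [Finset.sum_congr rfl hsum0, Finset.sum_const, smul_zero, zero_add]
  -- the ψ part and the analytic remainder vanish; the center term gives 2πi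
  have hψ0 : (∮ t in C(ζ, r), ψ t) = 0 := by
    apply circleIntegral_eq_zero_of_differentiable_on_off_countable hr.le Set.countable_empty
    · exact fun t ht => ((hψa t (hUr ht)).continuousAt).continuousWithinAt
    · exact fun t ht => (hψa t (hUr (ball_subset_closedBall ht.1))).differentiableAt
  have hH0 : (∮ t in C(ζ, r), H (Λ t) * deriv Λ t) = 0 := by
    apply circleIntegral_eq_zero_of_differentiable_on_off_countable hr.le Set.countable_empty
    · intro t ht
      exact ((((hHV (Λ t) (hVr ⟨t, ht, rfl⟩)).comp (hΛa t (hUr ht))).mul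
        (hΛd t (hUr ht))).continuousAt).continuousWithinAt
    · intro t ht
      exact (((hHV (Λ t) (hVr ⟨t, ball_subset_closedBall ht.1, rfl⟩)).comp
        (hΛa t (hUr (ball_subset_closedBall ht.1)))).mul
        (hΛd t (hUr (ball_subset_closedBall ht.1)))).differentiableAt
  have hinv : CircleIntegrable (fun t : ℂ => (t - ζ)⁻¹) ζ r := by
    apply ContinuousOn.circleIntegrable hr.le
    exact (continuousOn_id.sub continuousOn_const).inv₀
      (fun t ht => sub_ne_zero.2 (hspne t ht))
  have hψi : CircleIntegrable ψ ζ r := ContinuousOn.circleIntegrable hr.le hcψ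
  rw [circleIntegral.integral_const_mul, circleIntegral_add' hinv hψi, hψ0, hH0,
    circleIntegral.integral_sub_center_inv ζ hr.ne']
  have hck : c k = (1 / (k.factorial : ℂ)) * iteratedDeriv k h (Λ ζ) :=
    iterate_dslope_self_eq (hha _ haV) k
  rw [← hck]
  have h2πi : (2 * (Real.pi : ℂ) * Complex.I) ≠ 0 := by
    simp [Real.pi_ne_zero, Complex.I_ne_zero]
  field_simp
  ring
end

section
/- Let ζ ∈ ℂ and let g be complex-analytic on a neighborhood of the closed disk of radius r > 0 centered at ζ, with g(ζ) = 0, g'(ζ) ≠ 0, and g and g' having no other zeros in that closed disk. Let h̃ be analytic on a neighborhood of the same closed disk and let k be a natural number. Then (1/(2πi)) ∮_{|t−ζ|=r} h̃(t) · g'(t)/g(t)^{k+1} dt = (1/k!) · ((D_g)^k h̃)(ζ), where D_g denotes the operator (D_g u)(t) = u'(t)/g'(t) and (D_g)^k is its k-fold iterate; equivalently, the residue at ζ of h̃(t) g'(t)/g(t)^{k+1} equals (1/k!)((D_g)^k h̃)(ζ). -/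
open Complex Metric

lemma residue_base_case
    (ζ : ℂ) (r : ℝ) (hr : 0 < r) (g htilde : ℂ → ℂ)
    (hg : ∃ U : Set ℂ, IsOpen U ∧ closedBall ζ r ⊆ U ∧ ∀ x ∈ U, AnalyticAt ℂ g x)
    (hgζ : g ζ = 0) (hg'ζ : deriv g ζ ≠ 0)
    (hgne : ∀ t ∈ closedBall ζ r, t ≠ ζ → g t ≠ 0)
    (hht : ∃ V : Set ℂ, IsOpen V ∧ closedBall ζ r ⊆ V ∧
      ∀ x ∈ V, AnalyticAt ℂ htilde x) :
    (∮ t in C(ζ, r), htilde t * deriv g t / g t) = 2 * Real.pi * Complex.I * htilde ζ := by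
  obtain ⟨U, hU, hUb, hgU⟩ := hg
  obtain ⟨V, hV, hVb, hhV⟩ := hht
  set G : ℂ → ℂ := dslope g ζ with hGdef
  have hGa : ∀ x ∈ U, AnalyticAt ℂ G x := by
    intro x hx
    rcases eq_or_ne x ζ with rfl | hne
    · obtain ⟨p, hp⟩ := hgU x hx
      exact hp.has_fpower_series_dslope_fslope.analyticAt
    · have h1 : AnalyticAt ℂ (fun t => (t - ζ)⁻¹ • (g t - g ζ)) x :=
        ((analyticAt_id.sub analyticAt_const).inv (sub_ne_zero.2 hne)).smul
          ((hgU x hx).sub analyticAt_const)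
      exact h1.congr (dslope_eventuallyEq_slope_of_ne g hne).symm
  have hGζ : G ζ = deriv g ζ := dslope_same g ζ
  have factor : ∀ t, g t = (t - ζ) * G t := by
    intro t
    have h := sub_smul_dslope g ζ t
    rw [smul_eq_mul, hgζ, sub_zero] at h
    exact h.symm
  have hGne : ∀ t ∈ closedBall ζ r, G t ≠ 0 := by
    intro t ht
    rcases eq_or_ne t ζ with rfl | hne
    · rw [hGζ]; exact hg'ζ
    · intro h0
      apply hgne t ht hne
      rw [factor t, h0, mul_zero]
  have hG'a : ∀ x ∈ U, AnalyticAt ℂ (deriv G) x :=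
    fun x hx => AnalyticOnNhd.deriv_of_isOpen hGa hU x hx
  -- derivative identity on U
  have hderiv : ∀ x ∈ U, deriv g x = G x + (x - ζ) * deriv G x := by
    intro x hx
    have hGd : HasDerivAt G (deriv G x) x := ((hGa x hx).differentiableAt).hasDerivAt
    have h1 : HasDerivAt (fun t => (t - ζ) * G t) (1 * G x + (x - ζ) * deriv G x) x :=
      ((hasDerivAt_id x).sub_const ζ).mul hGd
    have h2 : HasDerivAt g (1 * G x + (x - ζ) * deriv G x) x := by
      have : (fun t => (t - ζ) * G t) = g := funext fun t => (factor t).symm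
      rwa [this] at h1
    rw [h2.deriv]; ring
  -- the two pieces
  have hφint : (∮ t in C(ζ, r), htilde t * deriv G t / G t) = 0 := by
    apply Complex.circleIntegral_eq_zero_of_differentiable_on_off_countable hr.le
      Set.countable_empty
    · intro t ht
      have htU : t ∈ U := hUb ht
      have htV : t ∈ V := hVb ht
      exact (((hhV t htV).continuousAt.mul (hG'a t htU).continuousAt).div
        (hGa t htU).continuousAt (hGne t ht)).continuousWithinAt
    · rintro t ⟨ht, -⟩
      have ht' : t ∈ closedBall ζ r := ball_subset_closedBall ht
      exact (((hhV t (hVb ht')).mul (hG'a t (hUb ht'))).div (hGa t (hUb ht'))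
        (hGne t ht')).differentiableAt
  have hψint : (∮ t in C(ζ, r), (t - ζ)⁻¹ * htilde t) = 2 * Real.pi * Complex.I * htilde ζ := by
    have := Complex.circleIntegral_sub_inv_smul_of_differentiable_on_off_countable
      (s := ∅) Set.countable_empty (mem_ball_self hr) (f := htilde)
      (fun t ht => (hhV t (hVb ht)).continuousAt.continuousWithinAt)
      (fun t ht => (hhV t (hVb (ball_subset_closedBall ht.1))).differentiableAt)
    simpa [smul_eq_mul] using this
  -- integrands
  have hsphere : ∀ t ∈ sphere ζ r, t ≠ ζ := by
    intro t ht
    rw [mem_sphere, dist_eq] at ht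
    intro h; rw [h] at ht; simp at ht; linarith
  have hEq : Set.EqOn (fun t => htilde t * deriv g t / g t)
      (fun t => (t - ζ)⁻¹ * htilde t + htilde t * deriv G t / G t) (sphere ζ r) := by
    intro t ht
    have htc : t ∈ closedBall ζ r := sphere_subset_closedBall ht
    have htζ : t ≠ ζ := hsphere t ht
    have hG0 : G t ≠ 0 := hGne t htc
    have htζ' : t - ζ ≠ 0 := sub_ne_zero.2 htζ
    simp only
    rw [hderiv t (hUb htc), factor t]
    field_simp
  have hint1 : CircleIntegrable (fun t => (t - ζ)⁻¹ * htilde t) ζ r := by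
    apply ContinuousOn.circleIntegrable hr.le
    intro t ht
    exact (((continuousAt_id.sub continuousAt_const).inv₀
      (sub_ne_zero.2 (hsphere t ht))).mul
      (hhV t (hVb (sphere_subset_closedBall ht))).continuousAt).continuousWithinAt
  have hint2 : CircleIntegrable (fun t => htilde t * deriv G t / G t) ζ r := by
    apply ContinuousOn.circleIntegrable hr.le
    intro t ht
    have htc : t ∈ closedBall ζ r := sphere_subset_closedBall ht
    exact (((hhV t (hVb htc)).continuousAt.mul (hG'a t (hUb htc)).continuousAt).div
      (hGa t (hUb htc)).continuousAt (hGne t htc)).continuousWithinAt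
  have hintL : CircleIntegrable (fun t => htilde t * deriv g t / g t) ζ r := by
    apply ContinuousOn.circleIntegrable hr.le
    intro t ht
    have htc : t ∈ closedBall ζ r := sphere_subset_closedBall ht
    have hg'c : ContinuousAt (deriv g) t :=
      (AnalyticOnNhd.deriv_of_isOpen hgU hU t (hUb htc)).continuousAt
    exact (((hhV t (hVb htc)).continuousAt.mul hg'c).div (hgU t (hUb htc)).continuousAt
      (hgne t htc (hsphere t ht))).continuousWithinAt
  have hEq' : Set.EqOn (fun t => (t - ζ)⁻¹ * htilde t)
      (fun t => htilde t * deriv g t / g t - htilde t * deriv G t / G t) (sphere ζ r) := by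
    intro t ht
    have h := hEq ht
    simp only at h ⊢
    rw [h]; ring
  have h1 : (∮ t in C(ζ, r), (t - ζ)⁻¹ * htilde t)
      = (∮ t in C(ζ, r), htilde t * deriv g t / g t)
        - ∮ t in C(ζ, r), htilde t * deriv G t / G t :=
    (circleIntegral.integral_congr hr.le hEq').trans
      (circleIntegral.integral_sub hintL hint2)
  rw [hψint, hφint, sub_zero] at h1
  exact h1.symm

/-- Residue computation: `(1/(2πi)) ∮_{|t−ζ|=r} h̃(t) g'(t)/g(t)^{k+1} dt
= (1/k!) ((D_g)^k h̃)(ζ)`, when `g(ζ)=0`, `g'(ζ)≠0`, and `g`, `g'` have no other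
zeros in the closed disk. -/
theorem residue_formula_via_weighted_diff
    (ζ : ℂ) (r : ℝ) (hr : 0 < r) (g htilde : ℂ → ℂ) (k : ℕ)
    (hg : ∃ U : Set ℂ, IsOpen U ∧ closedBall ζ r ⊆ U ∧ ∀ x ∈ U, AnalyticAt ℂ g x)
    (hgζ : g ζ = 0) (hg'ζ : deriv g ζ ≠ 0)
    (hgne : ∀ t ∈ closedBall ζ r, t ≠ ζ → g t ≠ 0)
    (hg'ne : ∀ t ∈ closedBall ζ r, deriv g t ≠ 0)
    (hht : ∃ V : Set ℂ, IsOpen V ∧ closedBall ζ r ⊆ V ∧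
      ∀ x ∈ V, AnalyticAt ℂ htilde x) :
    (1 / (2 * Real.pi * Complex.I)) *
        (∮ t in C(ζ, r), htilde t * deriv g t / g t ^ (k + 1))
      = (1 / (k.factorial : ℂ)) * (Dg g)^[k] htilde ζ := by
  have h2πI : (2 * (Real.pi : ℂ) * Complex.I) ≠ 0 := by
    simp [Real.pi_ne_zero, Complex.I_ne_zero]
  induction k generalizing htilde with
  | zero =>
    have hb := residue_base_case ζ r hr g htilde hg hgζ hg'ζ hgne hht
    simp only [Nat.factorial_zero, Nat.cast_one, Function.iterate_zero, id_eq, zero_add,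
      pow_one]
    rw [hb]
    field_simp
  | succ k ih =>
    obtain ⟨U, hU, hUb, hgU⟩ := hg
    obtain ⟨V, hV, hVb, hhV⟩ := hht
    -- basics
    have hsphere : ∀ t ∈ sphere ζ r, t ≠ ζ := by
      intro t ht
      rw [mem_sphere, dist_eq] at ht
      intro h; rw [h] at ht; simp at ht; linarith
    have hg'aU : ∀ x ∈ U, AnalyticAt ℂ (deriv g) x :=
      fun x hx => AnalyticOnNhd.deriv_of_isOpen hgU hU x hx
    have hh'aV : ∀ x ∈ V, AnalyticAt ℂ (deriv htilde) x :=
      fun x hx => AnalyticOnNhd.deriv_of_isOpen hhV hV x hx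
    -- the open set where deriv g ≠ 0
    set W : Set ℂ := (U ∩ V) ∩ {x | deriv g x ≠ 0} with hWdef
    have hWopen : IsOpen W := by
      rw [isOpen_iff_mem_nhds]
      rintro x ⟨⟨hxU, hxV⟩, hx0⟩
      have hcont : ContinuousAt (deriv g) x := (hg'aU x hxU).continuousAt
      have h1 : {y | deriv g y ≠ 0} ∈ nhds x := hcont.eventually_ne hx0
      exact Filter.inter_mem (Filter.inter_mem (hU.mem_nhds hxU) (hV.mem_nhds hxV)) h1
    have hWb : closedBall ζ r ⊆ W := fun t ht => ⟨⟨hUb ht, hVb ht⟩, hg'ne t ht⟩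
    have hDgA : ∀ x ∈ W, AnalyticAt ℂ (Dg g htilde) x := by
      rintro x ⟨⟨hxU, hxV⟩, hx0⟩
      exact (hh'aV x hxV).div (hg'aU x hxU) hx0
    -- integration by parts: the derivative of htilde / g^(k+1)
    have hderivzero :
        (∮ t in C(ζ, r), (deriv htilde t * g t ^ (k+1) - htilde t *
          ((k+1 : ℕ) * g t ^ k * deriv g t)) / (g t ^ (k+1)) ^ 2) = 0 := by
      apply circleIntegral.integral_eq_zero_of_hasDerivWithinAt hr.le
      intro t ht
      have htc : t ∈ closedBall ζ r := sphere_subset_closedBall ht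
      have hg0 : g t ≠ 0 := hgne t htc (hsphere t ht)
      have hhd : HasDerivAt htilde (deriv htilde t) t :=
        (hhV t (hVb htc)).differentiableAt.hasDerivAt
      have hgd : HasDerivAt g (deriv g t) t :=
        (hgU t (hUb htc)).differentiableAt.hasDerivAt
      have hgp : HasDerivAt (fun y => g y ^ (k+1))
          ((k+1 : ℕ) * g t ^ k * deriv g t) t := by
        have := hgd.pow (k+1)
        simpa [Pi.pow_def] using this
      exact ((hhd.div hgp (pow_ne_zero _ hg0))).hasDerivWithinAt
    -- pointwise identity on sphere
    have hEq : Set.EqOn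
        (fun t => (deriv htilde t * g t ^ (k+1) - htilde t *
          ((k+1 : ℕ) * g t ^ k * deriv g t)) / (g t ^ (k+1)) ^ 2)
        (fun t => Dg g htilde t * deriv g t / g t ^ (k + 1)
          - ((k : ℂ) + 1) * (htilde t * deriv g t / g t ^ (k + 1 + 1))) (sphere ζ r) := by
      intro t ht
      have htc : t ∈ closedBall ζ r := sphere_subset_closedBall ht
      have hg0 : g t ≠ 0 := hgne t htc (hsphere t ht)
      have hg'0 : deriv g t ≠ 0 := hg'ne t htc
      simp only [Dg]
      push_cast
      field_simp
      ring
    -- integrability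
    have hintA : CircleIntegrable
        (fun t => htilde t * deriv g t / g t ^ (k + 1 + 1)) ζ r := by
      apply ContinuousOn.circleIntegrable hr.le
      intro t ht
      have htc : t ∈ closedBall ζ r := sphere_subset_closedBall ht
      exact (((hhV t (hVb htc)).continuousAt.mul (hg'aU t (hUb htc)).continuousAt).div
        ((hgU t (hUb htc)).continuousAt.pow _)
        (pow_ne_zero _ (hgne t htc (hsphere t ht)))).continuousWithinAt
    have hintB : CircleIntegrable
        (fun t => Dg g htilde t * deriv g t / g t ^ (k + 1)) ζ r := by
      apply ContinuousOn.circleIntegrable hr.le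
      intro t ht
      have htc : t ∈ closedBall ζ r := sphere_subset_closedBall ht
      exact (((hDgA t (hWb htc)).continuousAt.mul (hg'aU t (hUb htc)).continuousAt).div
        ((hgU t (hUb htc)).continuousAt.pow _)
        (pow_ne_zero _ (hgne t htc (hsphere t ht)))).continuousWithinAt
    -- relate the integrals
    have hintA' : CircleIntegrable
        (fun t => ((k : ℂ) + 1) * (htilde t * deriv g t / g t ^ (k + 1 + 1))) ζ r := by
      apply ContinuousOn.circleIntegrable hr.le
      intro t ht
      have htc : t ∈ closedBall ζ r := sphere_subset_closedBall ht
      exact (continuousAt_const.mul (((hhV t (hVb htc)).continuousAt.mul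
        (hg'aU t (hUb htc)).continuousAt).div
        ((hgU t (hUb htc)).continuousAt.pow _)
        (pow_ne_zero _ (hgne t htc (hsphere t ht))))).continuousWithinAt
    have hrel : (∮ t in C(ζ, r), Dg g htilde t * deriv g t / g t ^ (k + 1))
        = ((k : ℂ) + 1) * ∮ t in C(ζ, r), htilde t * deriv g t / g t ^ (k + 1 + 1) := by
      have h1 := (circleIntegral.integral_congr hr.le hEq).symm.trans hderivzero
      have h2 : (∮ t in C(ζ, r), (Dg g htilde t * deriv g t / g t ^ (k + 1)
            - ((k : ℂ) + 1) * (htilde t * deriv g t / g t ^ (k + 1 + 1))))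
          = (∮ t in C(ζ, r), Dg g htilde t * deriv g t / g t ^ (k + 1))
            - ∮ t in C(ζ, r), ((k : ℂ) + 1) * (htilde t * deriv g t / g t ^ (k + 1 + 1)) :=
        circleIntegral.integral_sub hintB hintA'
      have h3 : (∮ t in C(ζ, r), ((k : ℂ) + 1) * (htilde t * deriv g t / g t ^ (k + 1 + 1)))
          = ((k : ℂ) + 1) * ∮ t in C(ζ, r), htilde t * deriv g t / g t ^ (k + 1 + 1) :=
        circleIntegral.integral_const_mul _ _ _ _
      rw [h2, h3] at h1
      linear_combination h1
    -- apply IH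
    have hIH := ih (Dg g htilde) ⟨W, hWopen, hWb, hDgA⟩
    rw [Function.iterate_succ_apply]
    have hk1 : ((k : ℂ) + 1) ≠ 0 := Nat.cast_add_one_ne_zero k
    have hkf : ((k.factorial : ℂ)) ≠ 0 := Nat.cast_ne_zero.2 k.factorial_ne_zero
    have hfact : ((k+1).factorial : ℂ) = ((k : ℂ) + 1) * (k.factorial : ℂ) := by
      rw [Nat.factorial_succ]; push_cast; ring
    calc (1 / (2 * (Real.pi:ℂ) * Complex.I)) *
          (∮ t in C(ζ, r), htilde t * deriv g t / g t ^ (k + 1 + 1))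
        = (1/((k:ℂ)+1)) * ((1 / (2 * (Real.pi:ℂ) * Complex.I)) *
            ∮ t in C(ζ, r), Dg g htilde t * deriv g t / g t ^ (k + 1)) := by
          rw [hrel]; field_simp
      _ = (1/((k:ℂ)+1)) * ((1 / (k.factorial : ℂ)) * (Dg g)^[k] (Dg g htilde) ζ) := by
          rw [hIH]
      _ = (1 / ((k+1).factorial : ℂ)) * (Dg g)^[k] (Dg g htilde) ζ := by
          rw [hfact]; field_simp
end

section
/- Fix ζ ∈ ℂ with |ζ| < 1, let b_ζ(t) = (t − ζ)/(1 − conj(ζ)·t), let k be a natural number, and let f be complex-analytic on a neighborhood of the closed unit disk. Then ∫_𝕋 f(t)/b_ζ(t)^k · (1 − |ζ|²)/|t − ζ|² L(dt) = (1/k!) · ((D_{b_ζ})^k f)(ζ), where L is the normalized Lebesgue (arclength) measure on the unit circle 𝕋, D_{b_ζ} is the operator (D_{b_ζ} u)(t) = u'(t)/b_ζ'(t), and (D_{b_ζ})^k is its k-fold iterate. -/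
open Complex Metric

/-- The Blaschke factor with zero at `ζ`. -/
noncomputable def blaschke (ζ : ℂ) : ℂ → ℂ := fun t => (t - ζ) / (1 - (starRingEnd ℂ) ζ * t)

lemma one_sub_conj_mul_ne_zero {ζ z : ℂ} (h : ‖ζ‖ * ‖z‖ < 1) :
    1 - (starRingEnd ℂ) ζ * z ≠ 0 := by
  intro hz
  rw [sub_eq_zero] at hz
  have h1 : (1 : ℝ) = ‖(starRingEnd ℂ) ζ * z‖ := by rw [← hz]; simp
  rw [norm_mul, RCLike.norm_conj] at h1
  linarith

lemma blaschke_hasDerivAt (ζ z : ℂ) (h : 1 - (starRingEnd ℂ) ζ * z ≠ 0) :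
    HasDerivAt (blaschke ζ)
      ((1 - (starRingEnd ℂ) ζ * ζ) / (1 - (starRingEnd ℂ) ζ * z) ^ 2) z := by
  have h1 : HasDerivAt (fun w : ℂ => w - ζ) 1 z := (hasDerivAt_id z).sub_const ζ
  have h2 : HasDerivAt (fun w : ℂ => 1 - (starRingEnd ℂ) ζ * w) (-((starRingEnd ℂ) ζ * 1)) z :=
    (((hasDerivAt_id z).const_mul ((starRingEnd ℂ) ζ))).const_sub 1
  refine (h1.div h2 h).congr_deriv ?_
  field_simp
  ring

lemma Dg_blaschke_eq (ζ z : ℂ) (f : ℂ → ℂ) (hζζ : 1 - (starRingEnd ℂ) ζ * ζ ≠ 0)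
    (hcz : 1 - (starRingEnd ℂ) ζ * z ≠ 0) :
    Dg (blaschke ζ) f z
      = deriv f z * (1 - (starRingEnd ℂ) ζ * z) ^ 2 / (1 - (starRingEnd ℂ) ζ * ζ) := by
  unfold Dg
  rw [(blaschke_hasDerivAt ζ z hcz).deriv, div_div_eq_mul_div]

lemma key (ζ : ℂ) (hζ : ‖ζ‖ < 1) (k : ℕ) (f : ℂ → ℂ)
    (hf : ∃ U : Set ℂ, IsOpen U ∧ closedBall (0 : ℂ) 1 ⊆ U ∧ ∀ x ∈ U, AnalyticAt ℂ f x) :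
    (∮ z in C(0, 1), (1 - (starRingEnd ℂ) ζ * ζ) * f z * (1 - (starRingEnd ℂ) ζ * z) ^ k /
        ((1 - (starRingEnd ℂ) ζ * z) * (z - ζ) ^ (k + 1)))
      = (2 * ↑Real.pi * I) * (1 / (k.factorial : ℂ)) * ((Dg (blaschke ζ))^[k] f ζ) := by
  have hζζ : 1 - (starRingEnd ℂ) ζ * ζ ≠ 0 :=
    one_sub_conj_mul_ne_zero (by nlinarith [norm_nonneg ζ])
  induction k generalizing f with
  | zero =>
    obtain ⟨U, hU, hUsub, hfa⟩ := hf
    set g : ℂ → ℂ := fun z =>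
      (1 - (starRingEnd ℂ) ζ * ζ) * f z / (1 - (starRingEnd ℂ) ζ * z) with hg_def
    have hg : ∀ z ∈ closedBall (0 : ℂ) 1, DifferentiableAt ℂ g z := by
      intro z hz
      have hz1 : ‖z‖ ≤ 1 := mem_closedBall_zero_iff.mp hz
      have hcz : 1 - (starRingEnd ℂ) ζ * z ≠ 0 :=
        one_sub_conj_mul_ne_zero (by nlinarith [norm_nonneg ζ, norm_nonneg z])
      exact ((hfa z (hUsub hz)).differentiableAt.const_mul _).div (by fun_prop) hcz
    have hcauchy := DiffContOnCl.circleIntegral_sub_inv_smul (R := 1) (c := 0) (w := ζ) (f := g)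
      ⟨fun z hz => (hg z (ball_subset_closedBall hz)).differentiableWithinAt,
        by
          rw [closure_ball (0 : ℂ) one_ne_zero]
          exact fun z hz => (hg z hz).continuousAt.continuousWithinAt⟩
      (by simpa [mem_ball, dist_eq_norm] using hζ)
    calc (∮ z in C(0, 1), (1 - (starRingEnd ℂ) ζ * ζ) * f z * (1 - (starRingEnd ℂ) ζ * z) ^ 0 /
            ((1 - (starRingEnd ℂ) ζ * z) * (z - ζ) ^ (0 + 1)))
        = ∮ z in C(0, 1), (z - ζ)⁻¹ • g z := by
          refine circleIntegral.integral_congr zero_le_one fun z _ => ?_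
          simp only [hg_def, pow_zero, zero_add, pow_one, smul_eq_mul, div_eq_mul_inv, mul_inv]
          ring
      _ = (2 * ↑Real.pi * I : ℂ) • g ζ := hcauchy
      _ = (2 * ↑Real.pi * I) * (1 / ((Nat.factorial 0 : ℕ) : ℂ))
            * ((Dg (blaschke ζ))^[0] f ζ) := by
          simp only [hg_def, smul_eq_mul, Function.iterate_zero, id_eq, Nat.factorial_zero,
            Nat.cast_one]
          rw [mul_comm (1 - (starRingEnd ℂ) ζ * ζ) (f ζ), mul_div_assoc,
            div_self hζζ]
          ring
  | succ k ih =>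
    obtain ⟨U, hU, hUsub, hfa⟩ := hf
    have hfa' : AnalyticOnNhd ℂ f U := hfa
    -- facts on the sphere
    have hsph : ∀ z ∈ sphere (0 : ℂ) 1, ‖z‖ = 1 := fun z hz => mem_sphere_zero_iff_norm.mp hz
    have hcz : ∀ z ∈ sphere (0 : ℂ) 1, 1 - (starRingEnd ℂ) ζ * z ≠ 0 := fun z hz =>
      one_sub_conj_mul_ne_zero (by rw [hsph z hz, mul_one]; exact hζ)
    have hzζ : ∀ z ∈ sphere (0 : ℂ) 1, z - ζ ≠ 0 := by
      intro z hz h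
      rw [sub_eq_zero] at h
      rw [← h, hsph z hz] at hζ
      exact lt_irrefl _ hζ
    set c : ℂ := (starRingEnd ℂ) ζ with hc
    set A : ℂ → ℂ := fun z => deriv f z * (1 - c * z) ^ (k + 1) / (z - ζ) ^ (k + 1) with hA
    set B : ℂ → ℂ := fun z =>
      ((k : ℂ) + 1) * (1 - c * ζ) * f z * (1 - c * z) ^ k / (z - ζ) ^ (k + 2) with hB
    have hAB : ∀ z ∈ sphere (0 : ℂ) 1,
        HasDerivAt (fun w => f w * (1 - c * w) ^ (k + 1) / (w - ζ) ^ (k + 1)) (A z - B z) z := by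
      intro z hz
      have h1 : z - ζ ≠ 0 := hzζ z hz
      have hfz : HasDerivAt f (deriv f z) z :=
        ((hfa z (hUsub (sphere_subset_closedBall hz))).differentiableAt).hasDerivAt
      have h2 : HasDerivAt (fun w : ℂ => (1 - c * w) ^ (k + 1))
          ((((k : ℕ) + 1 : ℕ) : ℂ) * (1 - c * z) ^ (k + 1 - 1) * (-(c * 1))) z :=
        ((((hasDerivAt_id z).const_mul c)).const_sub 1).pow (k + 1)
      have h3 : HasDerivAt (fun w : ℂ => (w - ζ) ^ (k + 1))
          ((((k : ℕ) + 1 : ℕ) : ℂ) * (z - ζ) ^ (k + 1 - 1) * 1) z :=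
        ((hasDerivAt_id z).sub_const ζ).pow (k + 1)
      have := (hfz.mul h2).div h3 (pow_ne_zero _ h1)
      refine this.congr_deriv ?_
      simp only [hA, hB, Nat.add_sub_cancel, Nat.cast_add, Nat.cast_one, mul_one, Pi.mul_apply]
      field_simp
      ring
    have hzero : (∮ z in C(0, 1), (A z - B z)) = 0 :=
      circleIntegral.integral_eq_zero_of_hasDerivWithinAt zero_le_one
        (fun z hz => (hAB z hz).hasDerivWithinAt)
    have hAcont : ContinuousOn A (sphere (0 : ℂ) 1) := by
      intro z hz
      refine ContinuousAt.continuousWithinAt ?_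
      have hd : ContinuousAt (deriv f) z :=
        (hfa'.deriv z (hUsub (sphere_subset_closedBall hz))).continuousAt
      exact (hd.mul (by fun_prop)).div (by fun_prop) (pow_ne_zero _ (hzζ z hz))
    have hBcont : ContinuousOn B (sphere (0 : ℂ) 1) := by
      intro z hz
      refine ContinuousAt.continuousWithinAt ?_
      have hfc : ContinuousAt f z :=
        (hfa z (hUsub (sphere_subset_closedBall hz))).continuousAt
      exact ((continuousAt_const.mul hfc).mul (by fun_prop)).div (by fun_prop)
        (pow_ne_zero _ (hzζ z hz))
    have hAint : CircleIntegrable A 0 1 := hAcont.circleIntegrable zero_le_one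
    have hBint : CircleIntegrable B 0 1 := hBcont.circleIntegrable zero_le_one
    have hABeq : (∮ z in C(0, 1), A z) = ∮ z in C(0, 1), B z := by
      have := circleIntegral.integral_sub hAint hBint
      rw [hzero] at this
      exact (sub_eq_zero.mp this.symm)
    -- analyticity of Dg (blaschke ζ) f
    have hDgf : ∃ V : Set ℂ, IsOpen V ∧ closedBall (0 : ℂ) 1 ⊆ V ∧
        ∀ x ∈ V, AnalyticAt ℂ (Dg (blaschke ζ) f) x := by
      refine ⟨U ∩ {z : ℂ | ‖ζ‖ * ‖z‖ < 1},
        hU.inter (isOpen_lt (continuous_const.mul continuous_norm) continuous_const),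
        fun z hz => ⟨hUsub hz, ?_⟩, ?_⟩
      · have hz1 : ‖z‖ ≤ 1 := mem_closedBall_zero_iff.mp hz
        have : ‖ζ‖ * ‖z‖ ≤ ‖ζ‖ * 1 := by nlinarith [norm_nonneg ζ]
        simpa using lt_of_le_of_lt (by simpa using this) hζ
      · rintro x ⟨hxU, hxlt⟩
        have hgx : AnalyticAt ℂ
            (fun z => deriv f z * (1 - c * z) ^ 2 / (1 - c * ζ)) x := by
          refine AnalyticAt.div ?_ analyticAt_const hζζ
          exact (hfa'.deriv x hxU).mul
            ((analyticAt_const.sub (analyticAt_const.mul (analyticAt_id))).pow 2)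
        refine hgx.congr ?_
        refine Filter.eventuallyEq_of_mem
          ((hU.inter (isOpen_lt (continuous_const.mul continuous_norm)
            continuous_const)).mem_nhds ⟨hxU, hxlt⟩) ?_
        rintro z ⟨hzU, hzlt⟩
        exact (Dg_blaschke_eq ζ z f hζζ (one_sub_conj_mul_ne_zero hzlt)).symm
    have hih := ih (Dg (blaschke ζ) f) hDgf
    have hk1 : ((k : ℂ) + 1) ≠ 0 := Nat.cast_add_one_ne_zero k
    calc (∮ z in C(0, 1), (1 - c * ζ) * f z * (1 - c * z) ^ (k + 1) /
            ((1 - c * z) * (z - ζ) ^ (k + 1 + 1)))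
        = ∮ z in C(0, 1), ((k : ℂ) + 1)⁻¹ * B z := by
          refine circleIntegral.integral_congr zero_le_one fun z hz => ?_
          have h1 := hcz z hz
          have h2 := hzζ z hz
          simp only [hB]
          rw [pow_succ (1 - c * z) k]
          field_simp
      _ = ((k : ℂ) + 1)⁻¹ * ∮ z in C(0, 1), B z := circleIntegral.integral_const_mul _ _ _ _
      _ = ((k : ℂ) + 1)⁻¹ * ∮ z in C(0, 1), A z := by rw [hABeq]
      _ = ((k : ℂ) + 1)⁻¹ * ∮ z in C(0, 1),
            (1 - c * ζ) * (Dg (blaschke ζ) f z) * (1 - c * z) ^ k /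
              ((1 - c * z) * (z - ζ) ^ (k + 1)) := by
          congr 1
          refine circleIntegral.integral_congr zero_le_one fun z hz => ?_
          have h1 := hcz z hz
          have h2 := hzζ z hz
          rw [Dg_blaschke_eq ζ z f hζζ h1]
          simp only [hA]
          rw [← hc]
          field_simp
          ring
      _ = (2 * ↑Real.pi * I) * (1 / ((k + 1).factorial : ℂ))
            * ((Dg (blaschke ζ))^[k + 1] f ζ) := by
          rw [hih, Function.iterate_succ_apply, Nat.factorial_succ]
          have hkf : ((k.factorial : ℕ) : ℂ) ≠ 0 := by
            exact_mod_cast Nat.factorial_ne_zero k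
          push_cast
          field_simp

lemma circle_pointwise (ζ : ℂ) (hζ : ‖ζ‖ < 1) (k : ℕ) (f : ℂ → ℂ) (t : ℂ) (ht : ‖t‖ = 1) :
    t * ((1 - (starRingEnd ℂ) ζ * ζ) * f t * (1 - (starRingEnd ℂ) ζ * t) ^ k /
        ((1 - (starRingEnd ℂ) ζ * t) * (t - ζ) ^ (k + 1)))
      = f t / (blaschke ζ t) ^ k * (((1 - ‖ζ‖ ^ 2) / ‖t - ζ‖ ^ 2 : ℝ) : ℂ) := by
  have ht0 : t ≠ 0 := by intro h; rw [h] at ht; simp at ht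
  have htζ : t - ζ ≠ 0 := by
    intro h
    rw [sub_eq_zero] at h
    rw [h] at ht; linarith [ht ▸ hζ]
  have hct : 1 - (starRingEnd ℂ) ζ * t ≠ 0 :=
    one_sub_conj_mul_ne_zero (by rw [ht, mul_one]; exact hζ)
  have hmc : t * (starRingEnd ℂ) t = 1 := by
    rw [Complex.mul_conj]
    norm_cast
    rw [Complex.normSq_eq_norm_sq, ht]; norm_num
  have hconj : (starRingEnd ℂ) t - (starRingEnd ℂ) ζ = (1 - (starRingEnd ℂ) ζ * t) / t := by
    field_simp
    linear_combination hmc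
  have hnorm : ((‖t - ζ‖ ^ 2 : ℝ) : ℂ)
      = (t - ζ) * (1 - (starRingEnd ℂ) ζ * t) / t := by
    rw [mul_div_assoc, ← hconj, ← map_sub, Complex.mul_conj]
    norm_cast
    rw [Complex.normSq_eq_norm_sq]
  have h1 : ((1 - ‖ζ‖ ^ 2 : ℝ) : ℂ) = 1 - (starRingEnd ℂ) ζ * ζ := by
    push_cast
    rw [mul_comm, Complex.mul_conj]
    norm_cast
    rw [Complex.normSq_eq_norm_sq]
  rw [Complex.ofReal_div, hnorm, h1, blaschke]
  rw [div_pow]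
  have hbk : ((t - ζ) ^ k : ℂ) ≠ 0 := pow_ne_zero _ htζ
  have hck : ((1 - (starRingEnd ℂ) ζ * t) ^ k : ℂ) ≠ 0 := pow_ne_zero _ hct
  field_simp
  ring

/-- The paper's main theorem in the case of the unit disk with trivial Fuchsian group:
`∫_𝕋 f(t)/b_ζ(t)^k · (1 − |ζ|²)/|t − ζ|² L(dt) = (1/k!)((D_{b_ζ})^k f)(ζ)`, where `L`
is the normalized Lebesgue measure on the unit circle, parametrized by
`t = exp(iθ)`, `L(dt) = dθ/(2π)`. -/
theorem direct_cauchy_theorem_disk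
    (ζ : ℂ) (hζ : ‖ζ‖ < 1) (k : ℕ) (f : ℂ → ℂ)
    (hf : ∃ U : Set ℂ, IsOpen U ∧ closedBall (0 : ℂ) 1 ⊆ U ∧
      ∀ x ∈ U, AnalyticAt ℂ f x) :
    (1 / (2 * Real.pi) : ℂ) *
        ∫ θ in (0:ℝ)..(2 * Real.pi),
          f (Complex.exp (θ * Complex.I)) / (blaschke ζ (Complex.exp (θ * Complex.I))) ^ k
            * (((1 - ‖ζ‖ ^ 2) / ‖Complex.exp (θ * Complex.I) - ζ‖ ^ 2 : ℝ) : ℂ)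
      = (1 / (k.factorial : ℂ)) * (Dg (blaschke ζ))^[k] f ζ := by
  have hkey := key ζ hζ k f hf
  have hcirc : (∮ z in C(0, 1), (1 - (starRingEnd ℂ) ζ * ζ) * f z * (1 - (starRingEnd ℂ) ζ * z) ^ k /
        ((1 - (starRingEnd ℂ) ζ * z) * (z - ζ) ^ (k + 1)))
      = I * ∫ θ in (0:ℝ)..(2 * Real.pi),
          f (Complex.exp (θ * Complex.I)) / (blaschke ζ (Complex.exp (θ * Complex.I))) ^ k
            * (((1 - ‖ζ‖ ^ 2) / ‖Complex.exp (θ * Complex.I) - ζ‖ ^ 2 : ℝ) : ℂ) := by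
    rw [← intervalIntegral.integral_const_mul]
    unfold circleIntegral
    refine intervalIntegral.integral_congr fun θ _ => ?_
    have hcm : circleMap 0 1 θ = Complex.exp (θ * Complex.I) := by
      simp [circleMap]
    have hnorm1 : ‖Complex.exp ((θ : ℂ) * Complex.I)‖ = 1 := by
      rw [Complex.norm_exp_ofReal_mul_I]
    rw [deriv_circleMap, hcm, smul_eq_mul,
      ← circle_pointwise ζ hζ k f _ hnorm1]
    ring
  rw [hcirc] at hkey
  have hI : (I : ℂ) ≠ 0 := I_ne_zero
  have hπ : ((Real.pi : ℂ)) ≠ 0 := Complex.ofReal_ne_zero.mpr Real.pi_ne_zero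
  have h2 : (∫ θ in (0:ℝ)..(2 * Real.pi),
          f (Complex.exp (θ * Complex.I)) / (blaschke ζ (Complex.exp (θ * Complex.I))) ^ k
            * (((1 - ‖ζ‖ ^ 2) / ‖Complex.exp (θ * Complex.I) - ζ‖ ^ 2 : ℝ) : ℂ))
      = 2 * Real.pi * ((1 / (k.factorial : ℂ)) * (Dg (blaschke ζ))^[k] f ζ) := by
    apply mul_left_cancel₀ hI
    rw [hkey]; ring
  rw [h2]
  have : ((2 : ℂ) * Real.pi) ≠ 0 := by
    simp [hπ]
  field_simp
end
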